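/- Let 0 < p ≤ d/(d+2) and t_n = n^p, Δt_n = t_n - t_{n-1}. Let λ be a nonzero measure on (0,∞). Then ∑_{n≥1} ∫₀^∞ ((z/t_n)^{2/d} ∧ Δt_n) · (z/t_n) λ(dz) = ∞. -/

import Mathlib

open MeasureTheory

lemma tsum_ofReal_harmonic_top :
    (∑' n : ℕ, ENNReal.ofReal (1 / ((n : ℝ) + 1))) = ⊤ := by
  by_contra h
  have hsum : Summable fun n : ℕ => Real.toNNReal (1 / ((n : ℝ) + 1)) :=
    ENNReal.tsum_coe_ne_top_iff_summable.mp h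
  have hsum' : Summable fun n : ℕ => (1 / ((n : ℝ) + 1)) := by
    have := NNReal.summable_coe.mpr hsum
    convert this using 2 with n
    rw [Real.coe_toNNReal]
    positivity
  have : Summable fun n : ℕ => (1 / (n : ℝ)) := by
    rw [← summable_nat_add_iff 1]
    exact_mod_cast hsum'
  exact Real.not_summable_one_div_natCast this

theorem series_infinite_for_slow_polynomial_sequence (d : ℕ) (hd : 0 < d)
    (p : ℝ) (hp0 : 0 < p) (hp : p ≤ (d : ℝ) / (d + 2)) (lam : Measure ℝ)
    (hne : lam ≠ 0) (hsupp : lam (Set.Iic 0) = 0) :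
    (∑' n : ℕ, ∫⁻ z in Set.Ioi (0 : ℝ),
        ENNReal.ofReal
          (min ((z / ((n : ℝ) + 1) ^ p) ^ (2 / (d : ℝ)))
              (((n : ℝ) + 1) ^ p - (n : ℝ) ^ p)
            * (z / ((n : ℝ) + 1) ^ p)) ∂lam) = ⊤ := by
  have hd' : (0 : ℝ) < d := by exact_mod_cast hd
  have hp1 : p ≤ 1 := hp.trans (by rw [div_le_one (by positivity)]; linarith)
  -- exponent inequality : p - 1 ≤ -(p * (2 / d))
  have hexp : p - 1 ≤ -(p * (2 / (d : ℝ))) := by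
    have hpd : p * ((d : ℝ) + 2) ≤ d := (le_div_iff₀ (by positivity)).mp hp
    rw [show -(p * (2 / (d : ℝ))) = (-(2 * p)) / d by ring, le_div_iff₀ hd']
    nlinarith
  -- find ε > 0 with lam (Ioi ε) ≠ 0
  obtain ⟨ε, hε, hμ⟩ : ∃ ε : ℝ, 0 < ε ∧ lam (Set.Ioi ε) ≠ 0 := by
    by_contra hcon
    push_neg at hcon
    have hU : Set.Ioi (0 : ℝ) = ⋃ n : ℕ, Set.Ioi (1 / ((n : ℝ) + 1)) := by
      ext x
      simp only [Set.mem_Ioi, Set.mem_iUnion]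
      constructor
      · intro hx
        obtain ⟨n, hn⟩ := exists_nat_gt (1 / x)
        refine ⟨n, ?_⟩
        rw [div_lt_iff₀ (by positivity)]
        rw [div_lt_iff₀ hx] at hn
        nlinarith
      · rintro ⟨n, hn⟩
        exact lt_trans (by positivity) hn
    have h0 : lam (Set.Ioi (0 : ℝ)) = 0 := by
      rw [hU]
      refine le_antisymm (le_trans (measure_iUnion_le _) ?_) zero_le
      have hz : ∀ n : ℕ, lam (Set.Ioi (((n : ℝ) + 1)⁻¹)) = 0 :=
        fun n => hcon _ (by positivity)
      simp [one_div, hz]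
    apply hne
    ext s hs
    simp only [Measure.coe_zero, Pi.zero_apply]
    have hle : lam s ≤ lam (Set.Iic 0) + lam (Set.Ioi 0) := by
      refine le_trans (measure_mono ?_) (measure_union_le _ _)
      intro x _
      rcases le_or_gt x 0 with h | h
      · exact Or.inl h
      · exact Or.inr h
    rw [hsupp, h0, add_zero] at hle
    exact le_antisymm hle zero_le
  set c : ℝ := min (ε ^ (2 / (d : ℝ))) p * ε with hc
  have hcpos : 0 < c := mul_pos (lt_min (Real.rpow_pos_of_pos hε _) hp0) hε
  -- pointwise lower bound
  have key : ∀ n : ℕ, ∀ z ∈ Set.Ioi ε,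
      c * (1 / ((n : ℝ) + 1)) ≤
        min ((z / ((n : ℝ) + 1) ^ p) ^ (2 / (d : ℝ)))
            (((n : ℝ) + 1) ^ p - (n : ℝ) ^ p) * (z / ((n : ℝ) + 1) ^ p) := by
    intro n z hz
    have hz' : ε < z := hz
    set N : ℝ := (n : ℝ) with hN
    have hN0 : 0 ≤ N := Nat.cast_nonneg n
    have hN1 : (1 : ℝ) ≤ N + 1 := by linarith
    have hNpos : (0 : ℝ) < N + 1 := by linarith
    have ht : (0 : ℝ) < (N + 1) ^ p := Real.rpow_pos_of_pos hNpos p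
    -- Bernoulli: (N+1)^p - N^p ≥ p * (N+1)^(p-1)
    have hBern : p * (N + 1) ^ (p - 1) ≤ (N + 1) ^ p - N ^ p := by
      have hs : (-1 : ℝ) ≤ -(1 / (N + 1)) := by
        rw [neg_le_neg_iff, div_le_one hNpos]; linarith
      have hb := rpow_one_add_le_one_add_mul_self hs hp0.le hp1
      have h1s : 1 + -(1 / (N + 1)) = N / (N + 1) := by field_simp; ring
      rw [h1s] at hb
      have hmul := mul_le_mul_of_nonneg_right hb ht.le
      rw [Real.div_rpow hN0 hNpos.le, div_mul_cancel₀ _ (ne_of_gt ht)] at hmul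
      have hr : (1 + p * -(1 / (N + 1))) * (N + 1) ^ p
          = (N + 1) ^ p - p * (N + 1) ^ (p - 1) := by
        rw [Real.rpow_sub hNpos, Real.rpow_one]
        field_simp
        ring
      rw [hr] at hmul
      linarith
    -- power bound
    have hPow : ε ^ (2 / (d : ℝ)) * (N + 1) ^ (p - 1)
        ≤ (ε / (N + 1) ^ p) ^ (2 / (d : ℝ)) := by
      rw [Real.div_rpow hε.le ht.le, ← Real.rpow_mul hNpos.le,
        div_eq_mul_inv (ε ^ (2 / (d : ℝ))), ← Real.rpow_neg hNpos.le]
      exact mul_le_mul_of_nonneg_left (Real.rpow_le_rpow_of_exponent_le hN1 hexp)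
        (Real.rpow_nonneg hε.le _)
    have hzt : ε / (N + 1) ^ p ≤ z / (N + 1) ^ p := by gcongr
    have hεt : 0 < ε / (N + 1) ^ p := div_pos hε ht
    have e2 : (N + 1) ^ (p - 1) * (ε / (N + 1) ^ p) = ε * (1 / (N + 1)) := by
      rw [div_eq_mul_inv ε, ← Real.rpow_neg hNpos.le, mul_comm ε,
        ← mul_assoc, ← Real.rpow_add hNpos,
        show p - 1 + -p = -1 by ring, Real.rpow_neg_one]
      ring
    have step1 : c * (1 / (N + 1))
        = (min (ε ^ (2 / (d : ℝ))) p * (N + 1) ^ (p - 1)) * (ε / (N + 1) ^ p) := by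
      rw [mul_assoc (min (ε ^ (2 / (d : ℝ))) p) ((N + 1) ^ (p - 1)), e2, hc]; ring
    rw [step1]
    have hminle : min (ε ^ (2 / (d : ℝ))) p * (N + 1) ^ (p - 1)
        ≤ min ((ε / (N + 1) ^ p) ^ (2 / (d : ℝ))) ((N + 1) ^ p - N ^ p) := by
      refine le_min ?_ ?_
      · exact le_trans (mul_le_mul_of_nonneg_right (min_le_left _ _)
          (Real.rpow_nonneg hNpos.le _)) hPow
      · exact le_trans (mul_le_mul_of_nonneg_right (min_le_right _ _)
          (Real.rpow_nonneg hNpos.le _)) hBern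
    have hminle2 : min ((ε / (N + 1) ^ p) ^ (2 / (d : ℝ))) ((N + 1) ^ p - N ^ p)
        ≤ min ((z / (N + 1) ^ p) ^ (2 / (d : ℝ))) ((N + 1) ^ p - N ^ p) := by
      exact min_le_min (Real.rpow_le_rpow hεt.le hzt (by positivity)) le_rfl
    calc min (ε ^ (2 / (d : ℝ))) p * (N + 1) ^ (p - 1) * (ε / (N + 1) ^ p)
        ≤ min ((ε / (N + 1) ^ p) ^ (2 / (d : ℝ))) ((N + 1) ^ p - N ^ p)
            * (ε / (N + 1) ^ p) := by
          exact mul_le_mul_of_nonneg_right hminle hεt.le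
      _ ≤ min ((z / (N + 1) ^ p) ^ (2 / (d : ℝ))) ((N + 1) ^ p - N ^ p)
            * (z / (N + 1) ^ p) := by
          refine mul_le_mul (hminle2) hzt hεt.le ?_
          refine le_min (Real.rpow_nonneg ?_ _) ?_
          · exact le_of_lt (div_pos (hε.trans hz') ht)
          · have := mul_pos hp0 (Real.rpow_pos_of_pos hNpos (p - 1))
            linarith
  -- lower bound each term of the series
  have hbound : ∀ n : ℕ,
      ENNReal.ofReal c * ENNReal.ofReal (1 / ((n : ℝ) + 1)) * lam (Set.Ioi ε) ≤
        ∫⁻ z in Set.Ioi (0 : ℝ),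
          ENNReal.ofReal
            (min ((z / ((n : ℝ) + 1) ^ p) ^ (2 / (d : ℝ)))
                (((n : ℝ) + 1) ^ p - (n : ℝ) ^ p)
              * (z / ((n : ℝ) + 1) ^ p)) ∂lam := by
    intro n
    calc ENNReal.ofReal c * ENNReal.ofReal (1 / ((n : ℝ) + 1)) * lam (Set.Ioi ε)
        = ENNReal.ofReal (c * (1 / ((n : ℝ) + 1))) * lam (Set.Ioi ε) := by
          rw [ENNReal.ofReal_mul hcpos.le]
      _ = ∫⁻ _ in Set.Ioi ε, ENNReal.ofReal (c * (1 / ((n : ℝ) + 1))) ∂lam := by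
          rw [setLIntegral_const]
      _ ≤ ∫⁻ z in Set.Ioi ε,
            ENNReal.ofReal
              (min ((z / ((n : ℝ) + 1) ^ p) ^ (2 / (d : ℝ)))
                  (((n : ℝ) + 1) ^ p - (n : ℝ) ^ p)
                * (z / ((n : ℝ) + 1) ^ p)) ∂lam := by
          exact setLIntegral_mono' measurableSet_Ioi fun z hz =>
            ENNReal.ofReal_le_ofReal (key n z hz)
      _ ≤ _ := lintegral_mono_set (Set.Ioi_subset_Ioi hε.le)
  refine top_le_iff.mp ?_
  calc (⊤ : ENNReal)
      = ENNReal.ofReal c * (∑' n : ℕ, ENNReal.ofReal (1 / ((n : ℝ) + 1)))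
          * lam (Set.Ioi ε) := by
        rw [tsum_ofReal_harmonic_top, ENNReal.mul_top
          (by simpa [ENNReal.ofReal_eq_zero] using hcpos.not_ge),
          ENNReal.top_mul hμ]
    _ = ∑' n : ℕ, ENNReal.ofReal c * ENNReal.ofReal (1 / ((n : ℝ) + 1))
          * lam (Set.Ioi ε) := by
        rw [ENNReal.tsum_mul_right, ENNReal.tsum_mul_left]
    _ ≤ _ := ENNReal.tsum_le_tsum hbound
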